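/- arXiv:1605.02441 — 10 statements merged into one kernel-verified Lean document; each statement's English description precedes it below -/
import Mathlib

section
/- Define M(n) for integers n ≥ 0 by M(n) = Σ_{W=0}^{n} P^W · C(W + ⌊(n−W)/(K+1)⌋, W), where P ≥ 1 and K ≥ 0 are fixed integers. Then M satisfies the recurrence M(n) = P·M(n−1) + M(n−K−1) for all n ≥ K+1, with initial values M(n) = 1 + P + ⋯ + P^n for 0 ≤ n ≤ K. -/
open Finset

/-- `M(n) = Σ_{W=0}^n P^W C(W + ⌊(n−W)/(K+1)⌋, W)` satisfies the recurrence
`M(n) = P·M(n−1) + M(n−K−1)` for `n ≥ K+1`, with `M(n) = 1 + P + ⋯ + P^n` for `n ≤ K`. -/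
theorem shift_code_size_recurrence (P K : ℕ) (hP : 1 ≤ P) (M : ℕ → ℕ)
    (hM : ∀ n, M n = ∑ W ∈ range (n + 1), P ^ W * Nat.choose (W + (n - W) / (K + 1)) W) :
    (∀ n, K + 1 ≤ n → M n = P * M (n - 1) + M (n - K - 1)) ∧
    (∀ n, n ≤ K → M n = ∑ i ∈ range (n + 1), P ^ i) := by
  constructor
  · intro n hn
    have h1 : n - 1 + 1 = n := by omega
    have h2 : n - K - 1 + 1 = n - K := by omega
    rw [hM n, hM (n - 1), hM (n - K - 1), h1, h2]
    have hMK : ∑ W ∈ range (n - K), P ^ W * Nat.choose (W + (n - K - 1 - W) / (K + 1)) W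
        = ∑ W ∈ range (n + 1), P ^ W * Nat.choose (W + (n - W) / (K + 1) - 1) W := by
      rw [← Finset.sum_subset (Finset.range_subset_range.2 (show n - K ≤ n + 1 by omega))
        (fun W hW hW' => by
          simp only [mem_range] at hW hW'
          have hd : (n - W) / (K + 1) = 0 := Nat.div_eq_of_lt (by omega)
          rw [hd, Nat.choose_eq_zero_of_lt (by omega), Nat.mul_zero])]
      apply Finset.sum_congr rfl
      intro W hW
      simp only [mem_range] at hW
      have hle : K + 1 ≤ n - W := by omega
      have hdiv : (n - W) / (K + 1) = (n - W - (K + 1)) / (K + 1) + 1 :=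
        Nat.div_eq_sub_div (by omega) hle
      have h3 : n - K - 1 - W = n - W - (K + 1) := by omega
      rw [h3, hdiv]
      congr 2 <;> omega
    rw [hMK, Finset.sum_range_succ', Finset.sum_range_succ' (fun W => P ^ W * Nat.choose (W + (n - W) / (K + 1) - 1) W)]
    have h0 : (n - 0) / (K + 1) ≥ 1 := (Nat.one_le_div_iff (by omega)).2 (by omega)
    have hf0 : P ^ 0 * Nat.choose (0 + (n - 0) / (K + 1)) 0 = 1 := by simp
    have hh0 : P ^ 0 * Nat.choose (0 + (n - 0) / (K + 1) - 1) 0 = 1 := by simp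
    rw [hf0, hh0, Finset.mul_sum]
    have hterm : ∀ W ∈ range n,
        P ^ (W + 1) * Nat.choose (W + 1 + (n - (W + 1)) / (K + 1)) (W + 1)
        = P * (P ^ W * Nat.choose (W + (n - 1 - W) / (K + 1)) W)
          + P ^ (W + 1) * Nat.choose (W + 1 + (n - (W + 1)) / (K + 1) - 1) (W + 1) := by
      intro W hW
      simp only [mem_range] at hW
      have he : n - 1 - W = n - (W + 1) := by omega
      rw [he]
      set q := (n - (W + 1)) / (K + 1) with hq
      have h4 : W + 1 + q = (W + q) + 1 := by omega
      have h5 : W + 1 + q - 1 = W + q := by rw [h4, Nat.add_sub_cancel]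
      rw [h5, h4, Nat.choose_succ_succ (W + q) W]
      ring
    rw [Finset.sum_congr rfl hterm, Finset.sum_add_distrib]
    ring
  · intro n hn
    rw [hM n]
    apply Finset.sum_congr rfl
    intro W hW
    simp only [mem_range] at hW
    have hd : (n - W) / (K + 1) = 0 := Nat.div_eq_of_lt (by omega)
    rw [hd]
    simp
end

section
/- Let P ≥ 1, K ≥ 0 be integers and let r be the unique positive real root of x^(K+1) − P·x^K − 1. Define M(n) by M(n) = P·M(n−1) + M(n−K−1) for n ≥ K+1 and M(n) = 1 + P + ⋯ + P^n for 0 ≤ n ≤ K. Then lim_{n→∞} (1/n)·log₂ M(n) = log₂ r. -/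
open Filter Finset

/-- The zero-error capacity of the shift channel: the exponential growth rate of the optimal
code sizes `M(n)` is `log₂ r`, where `r` is the unique positive root of `x^(K+1) − P·x^K − 1`. -/
theorem shift_channel_capacity (P K : ℕ) (hP : 1 ≤ P) (r : ℝ) (hr : 0 < r)
    (hroot : r ^ (K + 1) - (P : ℝ) * r ^ K - 1 = 0)
    (M : ℕ → ℕ)
    (hMinit : ∀ n, n ≤ K → M n = ∑ i ∈ range (n + 1), P ^ i)
    (hMrec : ∀ n, K + 1 ≤ n → M n = P * M (n - 1) + M (n - K - 1)) :
    Tendsto (fun n : ℕ => (1 / (n : ℝ)) * Real.logb 2 (M n)) atTop (nhds (Real.logb 2 r)) := by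
  have hrK : (0:ℝ) < r ^ K := pow_pos hr K
  have hP1 : (1:ℝ) ≤ (P:ℝ) := by exact_mod_cast hP
  have hr1 : 1 < r := by nlinarith [pow_succ r K]
  have hPr : (P:ℝ) < r := by nlinarith [pow_succ r K]
  -- key bounds: r^n / r^K ≤ M n ≤ (K+1) * r^n
  have key : ∀ n : ℕ, r ^ n / r ^ K ≤ (M n : ℝ) ∧ (M n : ℝ) ≤ (K + 1) * r ^ n := by
    intro n
    induction n using Nat.strong_induction_on with
    | _ n ih =>
      rcases le_or_gt n K with hn | hn
      · rw [hMinit n hn]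
        constructor
        · have h1 : r ^ n / r ^ K ≤ 1 := by
            rw [div_le_one hrK]
            exact pow_le_pow_right₀ (le_of_lt hr1) hn
          calc r ^ n / r ^ K ≤ 1 := h1
            _ ≤ ((∑ i ∈ range (n + 1), P ^ i : ℕ) : ℝ) := by
                have : 1 ≤ ∑ i ∈ range (n + 1), P ^ i :=
                  Finset.single_le_sum (f := fun i => P ^ i) (fun i _ => Nat.zero_le _)
                    (Finset.mem_range.mpr (Nat.succ_pos n)) |>.trans_eq' (by simp)
                exact_mod_cast this
        · push_cast
          calc (∑ i ∈ range (n + 1), (P:ℝ) ^ i)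
              ≤ ∑ i ∈ range (n + 1), r ^ n := by
                apply Finset.sum_le_sum
                intro i hi
                have hiP : (P:ℝ) ^ i ≤ r ^ i := by
                  apply pow_le_pow_left₀ (by positivity) (le_of_lt hPr)
                refine hiP.trans ?_
                exact pow_le_pow_right₀ (le_of_lt hr1) (Nat.lt_succ_iff.mp (Finset.mem_range.mp hi))
            _ = (n + 1) * r ^ n := by rw [Finset.sum_const, Finset.card_range]; push_cast; ring
            _ ≤ (K + 1) * r ^ n := by
                have : (n:ℝ) + 1 ≤ (K:ℝ) + 1 := by exact_mod_cast Nat.succ_le_succ hn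
                nlinarith [pow_pos hr n]
      · -- n ≥ K + 1
        obtain ⟨a, rfl⟩ : ∃ a, n = a + (K + 1) := by
          exact ⟨n - (K+1), by omega⟩
        have hrecn := hMrec (a + (K + 1)) (by omega)
        have e1 : a + (K + 1) - 1 = a + K := by omega
        have e2 : a + (K + 1) - K - 1 = a := by omega
        rw [e1, e2] at hrecn
        have ih1 := ih (a + K) (by omega)
        have ih2 := ih a (by omega)
        have hpow : r ^ (a + (K + 1)) = (P:ℝ) * r ^ (a + K) + r ^ a := by
          have : r ^ (a + (K + 1)) = r ^ a * r ^ (K + 1) := by ring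
          rw [this]
          have : r ^ (K + 1) = (P:ℝ) * r ^ K + 1 := by linarith
          rw [this]; ring
        rw [hrecn]
        push_cast
        constructor
        · rw [hpow, add_div]
          have t1 : r ^ (a + K) / r ^ K ≤ (M (a + K) : ℝ) := ih1.1
          have t2 : r ^ a / r ^ K ≤ (M a : ℝ) := ih2.1
          have hd : (P:ℝ) * (r ^ (a + K) / r ^ K) = (P:ℝ) * r ^ (a + K) / r ^ K := by ring
          nlinarith
        · rw [hpow]
          have t1 : (M (a + K) : ℝ) ≤ (K + 1) * r ^ (a + K) := ih1.2
          have t2 : (M a : ℝ) ≤ (K + 1) * r ^ a := ih2.2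
          nlinarith
  have hMpos : ∀ n, (0:ℝ) < (M n : ℝ) := fun n =>
    lt_of_lt_of_le (by positivity) (key n).1
  set L := Real.logb 2 r with hL
  -- squeeze
  have hlow : Tendsto (fun n : ℕ => L - (K : ℝ) * L / n) atTop (nhds L) := by
    have : Tendsto (fun n : ℕ => (K : ℝ) * L / n) atTop (nhds 0) :=
      Tendsto.div_atTop tendsto_const_nhds tendsto_natCast_atTop_atTop
    simpa using tendsto_const_nhds.sub this
  have hhigh : Tendsto (fun n : ℕ => L + Real.logb 2 ((K:ℝ) + 1) / n) atTop (nhds L) := by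
    have : Tendsto (fun n : ℕ => Real.logb 2 ((K:ℝ) + 1) / n) atTop (nhds 0) :=
      Tendsto.div_atTop tendsto_const_nhds tendsto_natCast_atTop_atTop
    simpa using tendsto_const_nhds.add this
  refine tendsto_of_tendsto_of_tendsto_of_le_of_le' hlow hhigh ?_ ?_
  · filter_upwards [eventually_ge_atTop 1] with n hn
    have hnR : (0:ℝ) < (n:ℝ) := by exact_mod_cast hn
    have h1 : Real.logb 2 (r ^ n / r ^ K) ≤ Real.logb 2 (M n) := by
      refine (Real.logb_le_logb one_lt_two (by positivity) (hMpos n)).mpr (key n).1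
    have h2 : Real.logb 2 (r ^ n / r ^ K) = (n:ℝ) * L - (K:ℝ) * L := by
      rw [Real.logb_div (by positivity) (by positivity), Real.logb_pow, Real.logb_pow]
    rw [h2] at h1
    rw [sub_le_iff_le_add]
    calc L = (1 / (n:ℝ)) * ((n:ℝ) * L) := by field_simp
      _ = (1 / (n:ℝ)) * ((n:ℝ) * L - (K:ℝ) * L) + (K:ℝ) * L / n := by
          field_simp; ring
      _ ≤ (1 / (n:ℝ)) * Real.logb 2 (M n) + (K:ℝ) * L / n := by gcongr
  · filter_upwards [eventually_ge_atTop 1] with n hn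
    have hnR : (0:ℝ) < (n:ℝ) := by exact_mod_cast hn
    have h1 : Real.logb 2 (M n) ≤ Real.logb 2 (((K:ℝ) + 1) * r ^ n) := by
      refine (Real.logb_le_logb one_lt_two (hMpos n) (by positivity)).mpr (key n).2
    have h2 : Real.logb 2 (((K:ℝ) + 1) * r ^ n) = Real.logb 2 ((K:ℝ) + 1) + (n:ℝ) * L := by
      rw [Real.logb_mul (by positivity) (by positivity), Real.logb_pow]
    rw [h2] at h1
    calc (1 / (n:ℝ)) * Real.logb 2 (M n)
        ≤ (1 / (n:ℝ)) * (Real.logb 2 ((K:ℝ) + 1) + (n:ℝ) * L) := by gcongr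
      _ = L + Real.logb 2 ((K:ℝ) + 1) / n := by field_simp; ring
end

section
/- Every complex root ρ of x^(K+1) − P·x^K − 1 other than the unique positive real root r satisfies |ρ| < r. -/
/-- Every complex root of `x^(K+1) − P·x^K − 1` other than the unique positive real root `r`
has modulus strictly less than `r`. -/
theorem nonpositive_roots_smaller_modulus (P K : ℕ) (hP : 1 ≤ P) (hK : 1 ≤ K)
    (r : ℝ) (hr : 0 < r) (hroot : r ^ (K + 1) - (P : ℝ) * r ^ K - 1 = 0)
    (z : ℂ) (hz : z ^ (K + 1) - (P : ℂ) * z ^ K - 1 = 0) (hzr : z ≠ (r : ℂ)) :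
    ‖z‖ < r := by
  have hPpos : (0:ℝ) < P := by exact_mod_cast hP
  have hrK : (0:ℝ) < r ^ K := pow_pos hr K
  have hrfac : r ^ K * (r - P) = 1 := by linear_combination hroot
  have hrP : (P:ℝ) < r := by nlinarith
  have hzfac : z ^ K * (z - (P:ℂ)) = 1 := by linear_combination hz
  set a := ‖z‖ with ha
  have habs : a ^ K * ‖z - (P:ℂ)‖ = 1 := by
    have := congrArg (‖·‖) hzfac
    simpa [norm_mul, norm_pow] using this
  have htri : a - P ≤ ‖z - (P:ℂ)‖ := by
    have h1 : a ≤ ‖z - (P:ℂ)‖ + P := by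
      have := norm_add_le (z - (P:ℂ)) (P:ℂ)
      simpa using this
    linarith
  by_contra hcon
  push_neg at hcon
  rcases lt_or_eq_of_le hcon with hlt | heq
  · have haK : r ^ K ≤ a ^ K := pow_le_pow_left₀ hr.le hcon K
    nlinarith [habs, htri]
  · have heq' : a = r := heq.symm
    have habsz : ‖z - (P:ℂ)‖ = r - P := by
      have h2 : r ^ K * ‖z - (P:ℂ)‖ = r ^ K * (r - P) := by
        rw [hrfac, ← heq']; exact habs
      exact mul_left_cancel₀ (ne_of_gt hrK) h2
    have hnsq : Complex.normSq (z - (P:ℂ)) = (r - P)^2 := by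
      rw [← Complex.sq_norm, habsz]
    have hnz : Complex.normSq z = r ^ 2 := by
      rw [← Complex.sq_norm, ← ha, heq']
    have h1 : Complex.normSq (z - (P:ℂ)) = Complex.normSq z - 2*P*z.re + P^2 := by
      simp [Complex.normSq_apply, Complex.sub_re, Complex.sub_im]
      ring
    have hre : z.re = r := by nlinarith
    have him2 : z.im ^ 2 = 0 := by
      have h3 : z.re^2 + z.im^2 = r^2 := by
        have := hnz; simpa [Complex.normSq_apply, sq] using this
      nlinarith
    have him : z.im = 0 := by
      exact pow_eq_zero_iff (two_ne_zero) |>.mp him2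
    exact hzr (Complex.ext (by simp [hre]) (by simp [him]))
end

section
/- Let K ≥ 0 and P ≥ 1 be fixed and let r(K) be the unique positive root of x^(K+1) − P·x^K − 1 as a function of real K ≥ 0. Then r(0) = P + 1, r is strictly decreasing in K, and lim_{K→∞} r(K) = P. -/
open Filter

/-- As a function of real `K ≥ 0`, the unique positive root `r(K)` of `x^(K+1) − P·x^K − 1`
satisfies `r(0) = P + 1`, is strictly decreasing, and tends to `P` as `K → ∞`. -/
theorem root_as_function_of_K (P : ℝ) (hP : 1 ≤ P) (r : ℝ → ℝ)
    (hr : ∀ K : ℝ, 0 ≤ K → 0 < r K ∧ (r K) ^ (K + 1) - P * (r K) ^ K - 1 = 0) :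
    r 0 = P + 1 ∧ StrictAntiOn r (Set.Ici 0) ∧ Tendsto r atTop (nhds P) := by
  have key : ∀ K : ℝ, 0 ≤ K → (r K) ^ K * (r K - P) = 1 := by
    intro K hK
    obtain ⟨hpos, heq⟩ := hr K hK
    have h1 : (r K) ^ (K + 1) = (r K) ^ K * r K := by
      rw [Real.rpow_add hpos, Real.rpow_one]
    nlinarith [heq, h1]
  have hgt : ∀ K : ℝ, 0 ≤ K → P < r K := by
    intro K hK
    have hk := key K hK
    have hpow : 0 < (r K) ^ K := Real.rpow_pos_of_pos (hr K hK).1 K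
    nlinarith
  have h0 : r 0 = P + 1 := by
    have hk := key 0 le_rfl
    rw [Real.rpow_zero] at hk
    linarith
  refine ⟨h0, ?_, ?_⟩
  · intro K1 h1 K2 h2 hlt
    simp only [Set.mem_Ici] at h1 h2
    by_contra hcon
    push_neg at hcon
    have ha := hgt K1 h1
    have hb := hgt K2 h2
    have hk1 := key K1 h1
    have hk2 := key K2 h2
    have hb1 : 1 < r K2 := lt_of_le_of_lt hP hb
    have hs1 : (r K2) ^ K1 < (r K2) ^ K2 :=
      Real.rpow_lt_rpow_of_exponent_lt hb1 hlt
    have hs2 : (r K1) ^ K1 ≤ (r K2) ^ K1 :=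
      Real.rpow_le_rpow (by linarith) hcon h1
    have hp1 : 0 < (r K1) ^ K1 := Real.rpow_pos_of_pos (hr K1 h1).1 K1
    nlinarith
  · rw [Metric.tendsto_atTop]
    intro ε hε
    set b := P + ε / 2 with hbdef
    have hb1 : 1 < b := by simp only [hbdef]; linarith
    have htend : Tendsto (fun K : ℝ => b ^ K) atTop atTop := by
      simp_rw [Real.rpow_def_of_pos (by positivity : (0:ℝ) < b)]
      exact Real.tendsto_exp_atTop.comp
        (Filter.Tendsto.const_mul_atTop (Real.log_pos hb1) tendsto_id)
    obtain ⟨N, hN⟩ := (htend.eventually_ge_atTop (2 / ε)).exists_forall_of_atTop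
    refine ⟨max N 0, fun K hK => ?_⟩
    have hK0 : 0 ≤ K := le_trans (le_max_right N 0) hK
    have hk := key K hK0
    have hg := hgt K hK0
    have hle : r K ≤ b := by
      by_contra hcon
      push_neg at hcon
      have hbK : (2 : ℝ) / ε ≤ b ^ K := hN K (le_trans (le_max_left N 0) hK)
      have hrK : b ^ K ≤ (r K) ^ K :=
        Real.rpow_le_rpow (by linarith) (le_of_lt hcon) hK0
      have hmul : (2 / ε) * (ε / 2) < (r K) ^ K * (r K - P) := by
        apply mul_lt_mul' (le_trans hbK hrK) (by simp only [hbdef] at hcon; linarith)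
          (by positivity) (Real.rpow_pos_of_pos (hr K hK0).1 K)
      have heq1 : (2 / ε) * (ε / 2) = 1 := by field_simp
      linarith
    have : |r K - P| < ε := by
      rw [abs_lt]
      have : r K - P ≤ ε / 2 := by simp only [hbdef] at hle; linarith
      constructor <;> linarith
    simpa [Real.dist_eq] using this
end

section
/- Define R(w) = ((wK+1)/(K+1))·H(w(K+1)/(wK+1)) + w·log₂ P for w ∈ [0,1], where H is the binary entropy function. Then R is concave on [0,1]. -/
/-- Binary entropy function to base 2 (with value 0 at the endpoints, since `logb 2 0 = 0`). -/
noncomputable def binH (p : ℝ) : ℝ := -p * Real.logb 2 p - (1 - p) * Real.logb 2 (1 - p)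

/-- The auxiliary function `G(w) = (wK+1)·ln(wK+1) − w(K+1)·ln(w(K+1)) − (1−w)·ln(1−w)`. -/
noncomputable def auxG (K : ℕ) (w : ℝ) : ℝ :=
  (w * K + 1) * Real.log (w * K + 1) - w * (K + 1) * Real.log (w * (K + 1))
    - (1 - w) * Real.log (1 - w)

lemma auxG_concave (K : ℕ) : ConcaveOn ℝ (Set.Icc (0 : ℝ) 1) (auxG K) := by
  set k : ℝ := (K : ℝ) with hk
  have hk0 : (0:ℝ) ≤ k := Nat.cast_nonneg K
  have hk1 : (0:ℝ) < k + 1 := by linarith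
  apply concaveOn_of_hasDerivWithinAt2_nonpos (f' := fun w =>
      k * Real.log (w * k + 1) - (k + 1) * Real.log (w * (k + 1)) + Real.log (1 - w))
    (f'' := fun w => k ^ 2 / (w * k + 1) - (k + 1) / w - 1 / (1 - w)) (convex_Icc 0 1)
  · -- continuity
    have hml : Continuous (fun t : ℝ => t * Real.log t) := Real.continuous_mul_log
    have c1 : Continuous fun w : ℝ => (w * k + 1) * Real.log (w * k + 1) := by
      exact hml.comp (by continuity : Continuous fun w : ℝ => w * k + 1)
    have c2 : Continuous fun w : ℝ => w * (k + 1) * Real.log (w * (k + 1)) := by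
      exact hml.comp (by continuity : Continuous fun w : ℝ => w * (k + 1))
    have c3 : Continuous fun w : ℝ => (1 - w) * Real.log (1 - w) := by
      exact hml.comp (by continuity : Continuous fun w : ℝ => 1 - w)
    exact ((c1.sub c2).sub c3).continuousOn
  · intro x hx
    rw [interior_Icc] at hx
    obtain ⟨hx0, hx1⟩ := hx
    have p1 : (0:ℝ) < x * k + 1 := by nlinarith
    have p2 : (0:ℝ) < x * (k + 1) := by positivity
    have p3 : (0:ℝ) < 1 - x := by linarith
    have l1 : HasDerivAt (fun w : ℝ => w * k + 1) k x := by
      simpa using ((hasDerivAt_id x).mul_const k).add_const 1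
    have l2 : HasDerivAt (fun w : ℝ => w * (k + 1)) (k + 1) x := by
      simpa using (hasDerivAt_id x).mul_const (k + 1)
    have l3 : HasDerivAt (fun w : ℝ => 1 - w) (-1) x := by
      simpa using (hasDerivAt_id x).const_sub 1
    have h1 := l1.mul (l1.log p1.ne')
    have h2 := l2.mul (l2.log p2.ne')
    have h3 := l3.mul (l3.log p3.ne')
    have := (h1.sub h2).sub h3
    apply HasDerivAt.hasDerivWithinAt
    convert this using 1
    · rfl
    · field_simp
      ring
  · intro x hx
    rw [interior_Icc] at hx
    obtain ⟨hx0, hx1⟩ := hx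
    have p1 : (0:ℝ) < x * k + 1 := by nlinarith
    have p2 : (0:ℝ) < x * (k + 1) := by positivity
    have p3 : (0:ℝ) < 1 - x := by linarith
    have l1 : HasDerivAt (fun w : ℝ => w * k + 1) k x := by
      simpa using ((hasDerivAt_id x).mul_const k).add_const 1
    have l2 : HasDerivAt (fun w : ℝ => w * (k + 1)) (k + 1) x := by
      simpa using (hasDerivAt_id x).mul_const (k + 1)
    have l3 : HasDerivAt (fun w : ℝ => 1 - w) (-1) x := by
      simpa using (hasDerivAt_id x).const_sub 1
    have h1 := (l1.log p1.ne').const_mul k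
    have h2 := (l2.log p2.ne').const_mul (k + 1)
    have h3 := l3.log p3.ne'
    have := (h1.sub h2).add h3
    apply HasDerivAt.hasDerivWithinAt
    convert this using 1
    · rfl
    · field_simp
      ring
  · intro x hx
    rw [interior_Icc] at hx
    obtain ⟨hx0, hx1⟩ := hx
    have p1 : (0:ℝ) < x * k + 1 := by nlinarith
    have p3 : (0:ℝ) < 1 - x := by linarith
    have h1 : k ^ 2 / (x * k + 1) ≤ (k + 1) / x := by
      rw [div_le_div_iff₀ p1 hx0]
      nlinarith
    have h2 : (0:ℝ) < 1 / (1 - x) := by positivity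
    linarith

/-- The constant-weight zero-error capacity
`R(w) = ((wK+1)/(K+1))·H(w(K+1)/(wK+1)) + w·log₂ P` is concave on `[0,1]`. -/
theorem constant_weight_capacity_concave (P K : ℕ) (hP : 1 ≤ P) :
    ConcaveOn ℝ (Set.Icc (0 : ℝ) 1)
      (fun w : ℝ =>
        ((w * K + 1) / (K + 1)) * binH (w * (K + 1) / (w * K + 1)) + w * Real.logb 2 P) := by
  have hk0 : (0:ℝ) ≤ (K : ℝ) := Nat.cast_nonneg K
  have hk1 : (0:ℝ) < (K : ℝ) + 1 := by linarith
  have hlog2 : (0:ℝ) < Real.log 2 := Real.log_pos (by norm_num)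
  have hc : (0:ℝ) ≤ 1 / (((K : ℝ) + 1) * Real.log 2) := by positivity
  have hP0 : (0:ℝ) ≤ Real.logb 2 P := by
    apply Real.logb_nonneg (by norm_num)
    exact_mod_cast hP
  have hlin : ConcaveOn ℝ (Set.Icc (0 : ℝ) 1) (fun w : ℝ => w * Real.logb 2 P) := by
    refine ⟨convex_Icc 0 1, fun x _ y _ a b _ _ _ => ?_⟩
    simp only [smul_eq_mul]
    exact le_of_eq (by ring)
  have hconc : ConcaveOn ℝ (Set.Icc (0 : ℝ) 1)
      (fun w : ℝ => (1 / (((K : ℝ) + 1) * Real.log 2)) * auxG K w + w * Real.logb 2 P) := by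
    have := ((auxG_concave K).smul hc).add hlin
    exact this
  apply hconc.congr
  intro w hw
  simp only
  rcases eq_or_lt_of_le hw.1 with h0 | h0
  · -- w = 0
    subst h0
    simp [binH, auxG]
  rcases eq_or_lt_of_le hw.2 with h1 | h1
  · -- w = 1
    subst h1
    have : ((K:ℝ) + 1) / ((K:ℝ) + 1) = 1 := div_self hk1.ne'
    simp [binH, auxG, this, hk1.ne']
  · -- 0 < w < 1
    have p1 : (0:ℝ) < w * K + 1 := by nlinarith
    have p2 : (0:ℝ) < w * ((K:ℝ) + 1) := by positivity
    have p3 : (0:ℝ) < 1 - w := by linarith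
    have e1 : 1 - w * ((K:ℝ) + 1) / (w * K + 1) = (1 - w) / (w * K + 1) := by
      field_simp
      ring
    rw [binH, e1, auxG, Real.logb, Real.logb, Real.logb,
      Real.log_div p2.ne' p1.ne', Real.log_div p3.ne' p1.ne']
    field_simp
    ring
end

section
/- Let P ≥ 1, K ≥ 0, and let r be the unique positive root of x^(K+1) − P·x^K − 1. Set w* = P/((K+1)(r−P) + P). Then 0 < w* < 1, w* satisfies the stationarity equation ((w*K+1)/(w*(K+1)))·((1−w*)/(w*K+1))^{1/(K+1)}·P = 1, and the maximum over w ∈ [0,1] of R(w) = ((wK+1)/(K+1))·H(w(K+1)/(wK+1)) + w·log₂ P equals log₂ r and is attained at w*. -/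
lemma klterm (a b : ℝ) (ha : 0 ≤ a) (hb : 0 < b) :
    a - b ≤ a * Real.log a - a * Real.log b := by
  rcases ha.eq_or_lt with h | h
  · simp [← h]; linarith
  · have h1 : Real.log (b / a) ≤ b / a - 1 := Real.log_le_sub_one_of_pos (by positivity)
    have h2 : Real.log (b / a) = Real.log b - Real.log a := Real.log_div hb.ne' h.ne'
    have h3 : a * Real.log (b / a) ≤ a * (b / a - 1) :=
      mul_le_mul_of_nonneg_left h1 h.le
    have h4 : a * (b / a - 1) = b - a := by field_simp
    nlinarith

lemma gibbs (p q : ℝ) (hp0 : 0 ≤ p) (hp1 : p ≤ 1) (hq0 : 0 < q) (hq1 : q < 1) :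
    binH p ≤ -p * Real.logb 2 q - (1 - p) * Real.logb 2 (1 - q) := by
  have h2 : (0:ℝ) < Real.log 2 := Real.log_pos one_lt_two
  have k1 := klterm p q hp0 hq0
  have k2 := klterm (1 - p) (1 - q) (by linarith) (by linarith)
  have key : -p * Real.log p - (1 - p) * Real.log (1 - p) ≤
      -p * Real.log q - (1 - p) * Real.log (1 - q) := by linarith
  unfold binH
  simp only [Real.logb]
  rw [show -p * (Real.log p / Real.log 2) - (1 - p) * (Real.log (1 - p) / Real.log 2)
      = (-p * Real.log p - (1 - p) * Real.log (1 - p)) / Real.log 2 by ring,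
    show -p * (Real.log q / Real.log 2) - (1 - p) * (Real.log (1 - q) / Real.log 2)
      = (-p * Real.log q - (1 - p) * Real.log (1 - q)) / Real.log 2 by ring]
  exact div_le_div_of_nonneg_right key h2.le

/-- The optimal weight `w* = P/((K+1)(r−P)+P)` lies in `(0,1)`, satisfies the stationarity
equation, and the maximum of `R(w)` over `[0,1]` equals `log₂ r` and is attained at `w*`. -/
theorem optimal_weight (P K : ℕ) (hP : 1 ≤ P) (r : ℝ) (hr : 0 < r)
    (hroot : r ^ (K + 1) - (P : ℝ) * r ^ K - 1 = 0) :
    let w : ℝ := (P : ℝ) / ((K + 1) * (r - P) + P)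
    let R : ℝ → ℝ := fun w =>
      ((w * K + 1) / (K + 1)) * binH (w * (K + 1) / (w * K + 1)) + w * Real.logb 2 P
    0 < w ∧ w < 1 ∧
    ((w * K + 1) / (w * (K + 1))) * (((1 - w) / (w * K + 1)) ^ (1 / ((K : ℝ) + 1))) * P = 1 ∧
    R w = Real.logb 2 r ∧
    IsMaxOn R (Set.Icc (0 : ℝ) 1) w := by
  intro w R
  have hP0 : (0:ℝ) < P := by exact_mod_cast hP
  have hK1 : (0:ℝ) < (K:ℝ) + 1 := by positivity
  have hrK : (0:ℝ) < r ^ K := pow_pos hr K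
  have hfact : r ^ K * (r - P) = 1 := by linear_combination hroot
  have hs : (0:ℝ) < r - P := by nlinarith
  have hPr : (P:ℝ) < r := by linarith
  have hD : (0:ℝ) < ((K:ℝ) + 1) * (r - P) + P := by positivity
  have hw_def : w = (P:ℝ) / (((K:ℝ) + 1) * (r - P) + P) := rfl
  have hw0 : 0 < w := div_pos hP0 hD
  have hw1 : w < 1 := by rw [hw_def, div_lt_one hD]; nlinarith
  -- algebraic identities at w
  have hA : w * K + 1 = ((K:ℝ) + 1) * r / (((K:ℝ) + 1) * (r - P) + P) := by
    rw [hw_def]; field_simp; ring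
  have hA0 : (0:ℝ) < w * K + 1 := by rw [hA]; positivity
  have hB : w * ((K:ℝ) + 1) / (w * K + 1) = (P:ℝ) / r := by
    rw [hA, hw_def]; field_simp
  have hE : (1 - w) / (w * K + 1) = (r ^ (K + 1))⁻¹ := by
    rw [hw_def]; field_simp
    linear_combination ((K:ℝ) + 1) * r * hfact
  -- logarithm values
  set L := Real.logb 2 r with hL
  set M := Real.logb 2 (P:ℝ) with hM
  have hlogPr : Real.logb 2 ((P:ℝ) / r) = M - L := Real.logb_div hP0.ne' hr.ne'
  have hsr : (r - (P:ℝ)) / r = (r ^ (K + 1))⁻¹ := by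
    field_simp
    linear_combination r * hfact
  have hloginv : Real.logb 2 ((r ^ (K + 1))⁻¹) = -(((K:ℝ) + 1) * L) := by
    rw [Real.logb_inv, Real.logb_pow]
    push_cast; ring
  -- q = P/r bounds
  have hq0 : (0:ℝ) < (P:ℝ) / r := div_pos hP0 hr
  have hq1 : (P:ℝ) / r < 1 := (div_lt_one hr).mpr hPr
  have h1q : 1 - (P:ℝ) / r = (r - P) / r := by field_simp
  -- binH at P/r
  have hbin : binH ((P:ℝ) / r) = -((P:ℝ)/r) * (M - L) - (1 - (P:ℝ)/r) * (-(((K:ℝ) + 1) * L)) := by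
    unfold binH
    rw [hlogPr, h1q, hsr, hloginv]
  -- value at w
  have hRw : R w = L := by
    show ((w * K + 1) / ((K:ℝ) + 1)) * binH (w * ((K:ℝ) + 1) / (w * K + 1)) + w * M = L
    rw [hB, hbin, hA, hw_def]
    field_simp
    ring
  refine ⟨hw0, hw1, ?_, hRw, ?_⟩
  · -- stationarity
    rw [hE]
    have hrpow : ((r ^ (K + 1))⁻¹ : ℝ) ^ (1 / ((K:ℝ) + 1)) = r⁻¹ := by
      have h1 : ((r ^ (K + 1))⁻¹ : ℝ) = r ^ (-((K + 1 : ℕ) : ℝ)) := by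
        rw [Real.rpow_neg hr.le, Real.rpow_natCast]
      rw [h1, ← Real.rpow_mul hr.le,
        show (-((K + 1 : ℕ) : ℝ)) * (1 / ((K:ℝ) + 1)) = -1 by push_cast; field_simp,
        Real.rpow_neg_one]
    rw [hrpow]
    have hB' : (w * (K:ℝ) + 1) / (w * ((K:ℝ) + 1)) = r / P := by
      rw [show (w * (K:ℝ) + 1) / (w * ((K:ℝ) + 1)) = (w * ((K:ℝ) + 1) / (w * (K:ℝ) + 1))⁻¹ by
        rw [inv_div], hB, inv_div]
    rw [hB']
    field_simp
  · -- maximality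
    intro x hx
    simp only [Set.mem_Icc] at hx
    obtain ⟨hx0, hx1⟩ := hx
    simp only [Set.mem_setOf_eq]
    rw [hRw]
    have hxK : (0:ℝ) ≤ x * K := mul_nonneg hx0 (Nat.cast_nonneg K)
    have hxd : (0:ℝ) < x * K + 1 := by linarith
    set p := x * ((K:ℝ) + 1) / (x * K + 1) with hp
    have hp0 : 0 ≤ p := div_nonneg (by positivity) hxd.le
    have hp1 : p ≤ 1 := by
      rw [hp, div_le_one hxd]; nlinarith
    have hgb := gibbs p ((P:ℝ)/r) hp0 hp1 hq0 hq1
    have hc : (0:ℝ) ≤ (x * K + 1) / ((K:ℝ) + 1) := by positivity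
    have step1 : R x ≤ ((x * K + 1) / ((K:ℝ) + 1)) *
        (-p * Real.logb 2 ((P:ℝ)/r) - (1 - p) * Real.logb 2 (1 - (P:ℝ)/r)) + x * M := by
      exact add_le_add_left (mul_le_mul_of_nonneg_left hgb hc) _
    have hcp : ((x * K + 1) / ((K:ℝ) + 1)) * p = x := by
      rw [hp]; field_simp
    have hc1p : ((x * K + 1) / ((K:ℝ) + 1)) * (1 - p) = (1 - x) / ((K:ℝ) + 1) := by
      rw [hp]; field_simp; ring
    have step2 : ((x * K + 1) / ((K:ℝ) + 1)) *
        (-p * Real.logb 2 ((P:ℝ)/r) - (1 - p) * Real.logb 2 (1 - (P:ℝ)/r)) + x * M = L := by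
      rw [hlogPr, h1q, hsr, hloginv]
      have expand : ((x * K + 1) / ((K:ℝ) + 1)) *
          (-p * (M - L) - (1 - p) * (-(((K:ℝ) + 1) * L)))
          = -(((x * K + 1) / ((K:ℝ) + 1)) * p) * (M - L)
            + (((x * K + 1) / ((K:ℝ) + 1)) * (1 - p)) * (((K:ℝ) + 1) * L) := by ring
      rw [expand, hcp, hc1p]
      field_simp
      ring
    calc R x ≤ _ := step1
      _ = L := step2
end

section
/- The maximum over w ∈ [0, 1/(K+1)] of the function f(w) = (1/(K+1))·H(w(K+1)) + w·log₂ P equals log₂(P+1)/(K+1), attained at w = P/((P+1)(K+1)). -/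
private lemma klaux (x y : ℝ) (hx : 0 < x) (hy : 0 < y) :
    x - y ≤ x * Real.log (x / y) := by
  have h := Real.log_le_sub_one_of_pos (show (0:ℝ) < y / x by positivity)
  have h2 : Real.log (y / x) = -Real.log (x / y) := by
    rw [← Real.log_inv]; congr 1; field_simp
  rw [h2] at h
  have h3 := mul_le_mul_of_nonneg_left h hx.le
  have h4 : x * (y / x - 1) = y - x := by field_simp
  nlinarith [h3, h4]

private lemma gle (Pr : ℝ) (hPr : 1 ≤ Pr) (p : ℝ) (hp0 : 0 ≤ p) (hp1 : p ≤ 1) :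
    -p * Real.log p - (1 - p) * Real.log (1 - p) + p * Real.log Pr ≤ Real.log (Pr + 1) := by
  have hPr0 : (0:ℝ) < Pr := by linarith
  have hPr1 : (0:ℝ) < Pr + 1 := by linarith
  rcases eq_or_lt_of_le hp0 with h0 | h0
  · simp [← h0]
    exact Real.log_nonneg (by linarith)
  rcases eq_or_lt_of_le hp1 with h1 | h1
  · rw [h1]
    simp
    have := Real.log_le_log hPr0 (show Pr ≤ Pr + 1 by linarith)
    linarith
  · set q : ℝ := Pr / (Pr + 1) with hqdef
    have hq0 : 0 < q := by positivity
    have hq1 : 1 - q = 1 / (Pr + 1) := by rw [hqdef]; field_simp; ring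
    have hq1' : 0 < 1 - q := by rw [hq1]; positivity
    have k1 := klaux p q h0 hq0
    have k2 := klaux (1 - p) (1 - q) (by linarith) hq1'
    have e1 : Real.log (p / q) = Real.log p - (Real.log Pr - Real.log (Pr + 1)) := by
      rw [Real.log_div (ne_of_gt h0) (ne_of_gt hq0), hqdef,
        Real.log_div (ne_of_gt hPr0) (ne_of_gt hPr1)]
    have e2 : Real.log ((1 - p) / (1 - q)) = Real.log (1 - p) + Real.log (Pr + 1) := by
      rw [Real.log_div (by linarith) (ne_of_gt hq1'), hq1,
        Real.log_div one_ne_zero (ne_of_gt hPr1), Real.log_one]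
      ring
    rw [e1] at k1
    rw [e2] at k2
    nlinarith [k1, k2]

private lemma gleb (Pr : ℝ) (hPr : 1 ≤ Pr) (p : ℝ) (hp0 : 0 ≤ p) (hp1 : p ≤ 1) :
    binH p + p * Real.logb 2 Pr ≤ Real.logb 2 (Pr + 1) := by
  have h := gle Pr hPr p hp0 hp1
  have hlog2 : (0:ℝ) < Real.log 2 := Real.log_pos one_lt_two
  unfold binH Real.logb
  have hL : -p * (Real.log p / Real.log 2) - (1 - p) * (Real.log (1 - p) / Real.log 2)
      + p * (Real.log Pr / Real.log 2)
      = (-p * Real.log p - (1 - p) * Real.log (1 - p) + p * Real.log Pr) / Real.log 2 := by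
    ring
  rw [hL]
  gcongr

private lemma geqb (Pr : ℝ) (hPr : 1 ≤ Pr) :
    binH (Pr / (Pr + 1)) + (Pr / (Pr + 1)) * Real.logb 2 Pr = Real.logb 2 (Pr + 1) := by
  have hPr0 : (0:ℝ) < Pr := by linarith
  have hPr1 : (0:ℝ) < Pr + 1 := by linarith
  have h1 : 1 - Pr / (Pr + 1) = 1 / (Pr + 1) := by field_simp; ring
  have e1 : Real.log (Pr / (Pr + 1)) = Real.log Pr - Real.log (Pr + 1) :=
    Real.log_div (ne_of_gt hPr0) (ne_of_gt hPr1)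
  have e2 : Real.log (1 / (Pr + 1)) = -Real.log (Pr + 1) := by
    rw [Real.log_div one_ne_zero (ne_of_gt hPr1), Real.log_one]; ring
  unfold binH Real.logb
  rw [h1, e1, e2]
  field_simp
  ring

/-- The maximum over `w ∈ [0, 1/(K+1)]` of `f(w) = (1/(K+1))·H(w(K+1)) + w·log₂ P` equals
`log₂(P+1)/(K+1)`, attained at `w = P/((P+1)(K+1))`. -/
theorem queue_low_weight_max (P K : ℕ) (hP : 1 ≤ P) :
    let f : ℝ → ℝ := fun w => (1 / ((K : ℝ) + 1)) * binH (w * (K + 1)) + w * Real.logb 2 P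
    let w : ℝ := (P : ℝ) / (((P : ℝ) + 1) * ((K : ℝ) + 1))
    f w = Real.logb 2 ((P : ℝ) + 1) / ((K : ℝ) + 1) ∧
    IsMaxOn f (Set.Icc (0 : ℝ) (1 / ((K : ℝ) + 1))) w := by
  intro f w
  have hK : (0:ℝ) < (K:ℝ) + 1 := by positivity
  have hPr : (1:ℝ) ≤ (P:ℝ) := by exact_mod_cast hP
  have hPr0 : (0:ℝ) < (P:ℝ) := by linarith
  have hPr1 : (0:ℝ) < (P:ℝ) + 1 := by linarith
  have hwK : w * ((K:ℝ) + 1) = (P:ℝ) / ((P:ℝ) + 1) := by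
    show (P:ℝ) / (((P:ℝ) + 1) * ((K:ℝ) + 1)) * ((K:ℝ) + 1) = (P:ℝ) / ((P:ℝ) + 1)
    field_simp
  have fval : ∀ x : ℝ, f x
      = (binH (x * ((K:ℝ) + 1)) + (x * ((K:ℝ) + 1)) * Real.logb 2 (P:ℝ)) / ((K:ℝ) + 1) := by
    intro x
    show (1 / ((K : ℝ) + 1)) * binH (x * ((K:ℝ) + 1)) + x * Real.logb 2 (P:ℝ) = _
    field_simp
  have hfw : f w = Real.logb 2 ((P : ℝ) + 1) / ((K : ℝ) + 1) := by
    rw [fval, hwK, geqb (P:ℝ) hPr]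
  refine ⟨hfw, ?_⟩
  intro x hx
  simp only [Set.mem_Icc] at hx
  have hp0 : 0 ≤ x * ((K:ℝ) + 1) := mul_nonneg hx.1 hK.le
  have hp1 : x * ((K:ℝ) + 1) ≤ 1 := by
    have := mul_le_mul_of_nonneg_right hx.2 hK.le
    calc x * ((K:ℝ) + 1) ≤ 1 / ((K:ℝ) + 1) * ((K:ℝ) + 1) := this
      _ = 1 := by field_simp
  have hb := gleb (P:ℝ) hPr (x * ((K:ℝ) + 1)) hp0 hp1
  show f x ≤ f w
  rw [fval x, hfw]
  gcongr
end

section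
/- Let E ≥ 0 and P ≥ 1. The maximum over w ∈ [1/(K+1), 1] of g(w) = w·log₂ P / max{1, w(E+1)} equals log₂ P / max{E+1, 1} = log₂ P/(E+1) when E ≥ 0, attained at w = 1; combining with the low-weight regime, the zero-error capacity of Q(P;K;φ) equals max{ log₂(P+1)/(K+1), log₂ P/(E+1) } where E = Σ_{k=0}^{K} k·φ(k). -/
open Finset

lemma key_log (P p : ℝ) (hP : 1 ≤ P) (hp0 : 0 ≤ p) (hp1 : p ≤ 1) :
    (-p * Real.log p - (1 - p) * Real.log (1 - p)) + p * Real.log P ≤ Real.log (P + 1) := by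
  have hP0 : (0:ℝ) < P := lt_of_lt_of_le one_pos hP
  have hP1 : (0:ℝ) < P + 1 := by linarith
  rcases eq_or_lt_of_le hp0 with h0 | h0
  · rw [← h0]; simp
    exact Real.log_nonneg (by linarith)
  rcases eq_or_lt_of_le hp1 with h1 | h1
  · rw [h1]; simp
    exact Real.log_le_log hP0 (by linarith)
  have hq : 0 < 1 - p := by linarith
  have h1' : Real.log (P / (p * (P + 1))) ≤ P / (p * (P + 1)) - 1 :=
    Real.log_le_sub_one_of_pos (by positivity)
  have h2' : Real.log (1 / ((1 - p) * (P + 1))) ≤ 1 / ((1 - p) * (P + 1)) - 1 :=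
    Real.log_le_sub_one_of_pos (by positivity)
  have e1 : Real.log (P / (p * (P + 1))) = Real.log P - (Real.log p + Real.log (P + 1)) := by
    rw [Real.log_div hP0.ne' (by positivity), Real.log_mul h0.ne' hP1.ne']
  have e2 : Real.log (1 / ((1 - p) * (P + 1))) = -(Real.log (1 - p) + Real.log (P + 1)) := by
    rw [one_div, Real.log_inv, Real.log_mul hq.ne' hP1.ne']
  have hA := mul_le_mul_of_nonneg_left h1' h0.le
  rw [e1] at hA
  have hA2 : p * (P / (p * (P + 1)) - 1) = P / (P + 1) - p := by field_simp
  have hB := mul_le_mul_of_nonneg_left h2' hq.le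
  rw [e2] at hB
  have hB2 : (1 - p) * (1 / ((1 - p) * (P + 1)) - 1) = 1 / (P + 1) - (1 - p) := by field_simp
  have hsum : P / (P + 1) + 1 / (P + 1) = 1 := by field_simp
  linarith

lemma key_logb (P p : ℝ) (hP : 1 ≤ P) (hp0 : 0 ≤ p) (hp1 : p ≤ 1) :
    binH p + p * Real.logb 2 P ≤ Real.logb 2 (P + 1) := by
  have h := key_log P p hP hp0 hp1
  have hl2 : (0:ℝ) < Real.log 2 := Real.log_pos one_lt_two
  simp only [binH, Real.logb]
  have e : -p * (Real.log p / Real.log 2) - (1 - p) * (Real.log (1 - p) / Real.log 2) +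
      p * (Real.log P / Real.log 2) =
      ((-p * Real.log p - (1 - p) * Real.log (1 - p)) + p * Real.log P) / Real.log 2 := by
    ring
  rw [e]
  exact div_le_div_of_nonneg_right h hl2.le

lemma key_eq (P : ℝ) (hP : 1 ≤ P) :
    binH (P / (P + 1)) + (P / (P + 1)) * Real.logb 2 P = Real.logb 2 (P + 1) := by
  have hP0 : (0:ℝ) < P := lt_of_lt_of_le one_pos hP
  have hP1 : (0:ℝ) < P + 1 := by linarith
  have h1 : 1 - P / (P + 1) = 1 / (P + 1) := by field_simp; ring
  have h2 : Real.logb 2 (P / (P + 1)) = Real.logb 2 P - Real.logb 2 (P + 1) :=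
    Real.logb_div hP0.ne' hP1.ne'
  have h3 : Real.logb 2 (1 / (P + 1)) = -Real.logb 2 (P + 1) := by
    rw [one_div, Real.logb_inv]
  simp only [binH, h1, h2, h3]
  field_simp
  ring

/-- The high-weight regime of the queue's rate function is maximized at `w = 1` with value
`log₂ P/(E+1)`, and the zero-error capacity of `Q(P;K;φ)` equals
`max{ log₂(P+1)/(K+1), log₂ P/(E+1) }`, where `E` is the mean processing time. -/
theorem queue_capacity (P K : ℕ) (hP : 1 ≤ P) (φ : ℕ → ℝ)
    (hφpos : ∀ k, k ≤ K → 0 < φ k) (hφsum : ∑ k ∈ range (K + 1), φ k = 1)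
    (E : ℝ) (hE : E = ∑ k ∈ range (K + 1), (k : ℝ) * φ k) :
    let g : ℝ → ℝ := fun w => w * Real.logb 2 P / max 1 (w * (E + 1))
    let R : ℝ → ℝ := fun w =>
      if w ≤ 1 / ((K : ℝ) + 1) then (1 / ((K : ℝ) + 1)) * binH (w * (K + 1)) + w * Real.logb 2 P
      else g w
    IsMaxOn g (Set.Icc (1 / ((K : ℝ) + 1)) 1) 1 ∧
    g 1 = Real.logb 2 P / (E + 1) ∧
    sSup (R '' Set.Icc (0 : ℝ) 1) =
      max (Real.logb 2 ((P : ℝ) + 1) / ((K : ℝ) + 1)) (Real.logb 2 P / (E + 1)) := by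
  intro g R
  have hP1 : (1:ℝ) ≤ (P:ℝ) := by exact_mod_cast hP
  have hP0 : (0:ℝ) < (P:ℝ) := lt_of_lt_of_le one_pos hP1
  have hKc : (0:ℝ) < (K:ℝ) + 1 := by positivity
  have hL : 0 ≤ Real.logb 2 (P:ℝ) := Real.logb_nonneg one_lt_two hP1
  have hE0 : 0 ≤ E := by
    rw [hE]
    refine Finset.sum_nonneg fun k hk => ?_
    exact mul_nonneg (Nat.cast_nonneg k)
      (hφpos k (Nat.lt_succ_iff.mp (Finset.mem_range.mp hk))).le
  have hE1 : (0:ℝ) < E + 1 := by linarith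
  have hg1 : g 1 = Real.logb 2 (P:ℝ) / (E + 1) := by
    show (1:ℝ) * Real.logb 2 (P:ℝ) / max 1 (1 * (E + 1)) = _
    rw [one_mul, one_mul, max_eq_right (by linarith)]
  have hmax : IsMaxOn g (Set.Icc (1 / ((K : ℝ) + 1)) 1) 1 := by
    rw [isMaxOn_iff]
    rintro x ⟨hx1, hx2⟩
    have hx0 : 0 < x := lt_of_lt_of_le (by positivity) hx1
    rw [hg1]
    show x * Real.logb 2 (P:ℝ) / max 1 (x * (E + 1)) ≤ _
    by_cases h : x * (E + 1) ≤ 1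
    · rw [max_eq_left h, div_one]
      have hx : x ≤ 1 / (E + 1) := by rw [le_div_iff₀ hE1]; exact h
      calc x * Real.logb 2 (P:ℝ) ≤ (1 / (E + 1)) * Real.logb 2 (P:ℝ) :=
            mul_le_mul_of_nonneg_right hx hL
        _ = Real.logb 2 (P:ℝ) / (E + 1) := one_div_mul_eq_div _ _
    · rw [max_eq_right (le_of_not_ge h), mul_div_mul_left _ _ hx0.ne']
  have hRle : ∀ w : ℝ, w ≤ 1 / ((K : ℝ) + 1) →
      R w = (1 / ((K : ℝ) + 1)) * binH (w * ((K : ℝ) + 1)) + w * Real.logb 2 (P:ℝ) :=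
    fun w h => if_pos h
  have hRgt : ∀ w : ℝ, ¬(w ≤ 1 / ((K : ℝ) + 1)) → R w = g w := fun w h => if_neg h
  have hub : ∀ w ∈ Set.Icc (0:ℝ) 1, R w ≤
      max (Real.logb 2 ((P : ℝ) + 1) / ((K : ℝ) + 1)) (Real.logb 2 (P:ℝ) / (E + 1)) := by
    rintro w ⟨hw0, hw1⟩
    by_cases h : w ≤ 1 / ((K : ℝ) + 1)
    · rw [hRle w h]
      refine le_trans ?_ (le_max_left _ _)
      have hp0 : 0 ≤ w * ((K:ℝ) + 1) := by positivity
      have hp1 : w * ((K:ℝ) + 1) ≤ 1 := by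
        have := (le_div_iff₀ hKc).mp h
        linarith
      have hk := key_logb (P:ℝ) (w * ((K:ℝ) + 1)) hP1 hp0 hp1
      have e : (1 / ((K:ℝ) + 1)) * binH (w * ((K:ℝ) + 1)) + w * Real.logb 2 (P:ℝ)
          = (binH (w * ((K:ℝ) + 1)) + (w * ((K:ℝ) + 1)) * Real.logb 2 (P:ℝ)) / ((K:ℝ) + 1) := by
        field_simp
      rw [e]
      exact div_le_div_of_nonneg_right hk hKc.le
    · rw [hRgt w h]
      refine le_trans ?_ (le_max_right _ _)
      calc g w ≤ g 1 := (isMaxOn_iff.mp hmax) w ⟨le_of_lt (lt_of_not_ge h), hw1⟩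
        _ = _ := hg1
  have hR1 : R 1 = Real.logb 2 (P:ℝ) / (E + 1) := by
    by_cases hK : K = 0
    · subst hK
      have hEz : E = 0 := by rw [hE]; simp
      rw [hRle 1 (by norm_num)]
      simp [binH, hEz]
    · have hgt : ¬((1:ℝ) ≤ 1 / ((K:ℝ) + 1)) := by
        rw [not_le, div_lt_one hKc]
        have : (1:ℝ) ≤ (K:ℝ) := by exact_mod_cast Nat.one_le_iff_ne_zero.mpr hK
        linarith
      rw [hRgt 1 hgt, hg1]
  have hA_mem : Real.logb 2 ((P : ℝ) + 1) / ((K : ℝ) + 1) ∈ R '' Set.Icc (0:ℝ) 1 := by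
    have hwle : (P:ℝ) / (((P:ℝ) + 1) * ((K:ℝ) + 1)) ≤ 1 / ((K:ℝ) + 1) := by
      rw [div_le_div_iff₀ (by positivity) hKc]
      nlinarith
    have hw0 : (0:ℝ) ≤ (P:ℝ) / (((P:ℝ) + 1) * ((K:ℝ) + 1)) := by positivity
    have hw1 : (P:ℝ) / (((P:ℝ) + 1) * ((K:ℝ) + 1)) ≤ 1 :=
      le_trans hwle (by rw [div_le_one hKc]; linarith)
    refine ⟨_, ⟨hw0, hw1⟩, ?_⟩
    rw [hRle _ hwle]
    have hwe : (P:ℝ) / (((P:ℝ) + 1) * ((K:ℝ) + 1)) * ((K:ℝ) + 1) = (P:ℝ) / ((P:ℝ) + 1) := by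
      field_simp
    rw [hwe]
    have hk := key_eq (P:ℝ) hP1
    have hb : binH ((P:ℝ) / ((P:ℝ) + 1))
        = Real.logb 2 ((P:ℝ) + 1) - ((P:ℝ) / ((P:ℝ) + 1)) * Real.logb 2 (P:ℝ) := by linarith
    rw [hb]
    field_simp
    ring
  have hB_mem : Real.logb 2 (P:ℝ) / (E + 1) ∈ R '' Set.Icc (0:ℝ) 1 :=
    ⟨1, ⟨zero_le_one, le_refl 1⟩, hR1⟩
  refine ⟨hmax, hg1, ?_⟩
  have hne : (R '' Set.Icc (0:ℝ) 1).Nonempty := ⟨_, hB_mem⟩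
  have hbdd : BddAbove (R '' Set.Icc (0:ℝ) 1) :=
    ⟨_, by rintro y ⟨w, hw, rfl⟩; exact hub w hw⟩
  refine le_antisymm (csSup_le hne ?_) (max_le (le_csSup hbdd hA_mem) (le_csSup hbdd hB_mem))
  rintro y ⟨w, hw, rfl⟩
  exact hub w hw
end

section
/- For fixed K ≥ 0, w ∈ (0,1), and integers n → ∞ with W = ⌊wn⌋, (1/n)·log₂ [ P^W · C(W + ⌊(n−W)/(K+1)⌋, W) ] converges to ((wK+1)/(K+1))·H(w(K+1)/(wK+1)) + w·log₂ P. -/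
open Filter

noncomputable def Efn (m : ℕ) : ℝ := Real.log (Nat.factorial m) - ((m:ℝ) * Real.log m - m)

lemma tendsto_Efn_div : Tendsto (fun m : ℕ => Efn m / m) atTop (nhds 0) := by
  have h1 : Tendsto (fun m : ℕ => Real.log (Stirling.stirlingSeq m) / m) atTop (nhds 0) := by
    have hl : Tendsto (fun m : ℕ => Real.log (Stirling.stirlingSeq m)) atTop
        (nhds (Real.log (Real.sqrt Real.pi))) :=
      ((Real.continuousAt_log (by positivity)).tendsto).comp Stirling.tendsto_stirlingSeq_sqrt_pi
    exact hl.div_atTop tendsto_natCast_atTop_atTop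
  have h2 : Tendsto (fun m : ℕ => 1 / 2 * Real.log (2 * m) / m) atTop (nhds 0) := by
    have hlog : Tendsto (fun x : ℝ => Real.log x / x) atTop (nhds 0) :=
      Real.isLittleO_log_id_atTop.tendsto_div_nhds_zero
    have hc : Tendsto (fun m : ℕ => (2 * m : ℝ)) atTop atTop :=
      tendsto_natCast_atTop_atTop.const_mul_atTop two_pos
    have h := hlog.comp hc
    refine Tendsto.congr' ?_ h
    filter_upwards [eventually_ge_atTop 1] with m hm
    have hm0 : (m : ℝ) ≠ 0 := by
      have : (0:ℕ) < m := hm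
      positivity
    simp only [Function.comp]
    field_simp
  have key : ∀ᶠ m in atTop,
      Real.log (Stirling.stirlingSeq m) / m + 1 / 2 * Real.log (2 * m) / m = Efn m / m := by
    filter_upwards [eventually_ge_atTop 1] with m hm
    have hm0 : (0:ℝ) < m := by exact_mod_cast hm
    have hf := Stirling.log_stirlingSeq_formula m
    have hle : Real.log ((m:ℝ) / Real.exp 1) = Real.log m - 1 := by
      rw [Real.log_div (ne_of_gt hm0) (Real.exp_ne_zero 1), Real.log_exp]
    have hsum : Real.log (Stirling.stirlingSeq m) + 1 / 2 * Real.log (2 * m) = Efn m := by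
      rw [hf, hle, Efn]; ring
    rw [← add_div, hsum]
  have h12 := h1.add h2
  rw [add_zero] at h12
  exact h12.congr' key

lemma tendsto_Efn_comp {u : ℕ → ℕ} (hu : Tendsto u atTop atTop) {c : ℝ}
    (hc : Tendsto (fun n : ℕ => (u n : ℝ) / n) atTop (nhds c)) :
    Tendsto (fun n : ℕ => Efn (u n) / n) atTop (nhds 0) := by
  have h := (tendsto_Efn_div.comp hu).mul hc
  rw [zero_mul] at h
  refine Tendsto.congr' ?_ h
  filter_upwards [hu.eventually_ge_atTop 1] with n hn
  have h0 : ((u n : ℕ) : ℝ) ≠ 0 := by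
    have : 0 < u n := hn
    positivity
  simp only [Function.comp]
  rw [div_mul_div_comm, mul_comm (Efn (u n)) _, mul_div_mul_left _ _ h0]

/-- Asymptotics of the constant-weight code sizes: with `W = ⌊wn⌋`,
`(1/n)·log₂[P^W · C(W + ⌊(n−W)/(K+1)⌋, W)]` converges to
`((wK+1)/(K+1))·H(w(K+1)/(wK+1)) + w·log₂ P`. -/
theorem constant_weight_capacity_limit (P K : ℕ) (hP : 1 ≤ P) (w : ℝ) (hw : w ∈ Set.Ioo (0:ℝ) 1) :
    Tendsto
      (fun n : ℕ =>
        (1 / (n : ℝ)) * Real.logb 2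
          ((P : ℝ) ^ (⌊w * n⌋₊) *
            (Nat.choose (⌊w * n⌋₊ + (n - ⌊w * n⌋₊) / (K + 1)) ⌊w * n⌋₊ : ℝ)))
      atTop
      (nhds (((w * K + 1) / (K + 1)) * binH (w * (K + 1) / (w * K + 1)) +
        w * Real.logb 2 P)) := by
  obtain ⟨hw0, hw1⟩ := hw
  set a : ℕ → ℕ := fun n => ⌊w * n⌋₊ with ha_def
  set b : ℕ → ℕ := fun n => (n - a n) / (K + 1) with hb_def
  set β : ℝ := (1 - w) / (K + 1) with hβ_def
  set s : ℝ := w + β with hs_def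
  have hK1 : (0:ℝ) < (K:ℝ) + 1 := by positivity
  have hβ0 : 0 < β := by
    rw [hβ_def]; exact div_pos (by linarith) hK1
  have hs0 : 0 < s := by rw [hs_def]; positivity
  have haln : ∀ n, a n ≤ n := by
    intro n
    have : ⌊w * n⌋₊ ≤ ⌊(n:ℝ)⌋₊ := by
      apply Nat.floor_le_floor
      nlinarith [Nat.cast_nonneg (α := ℝ) n]
    simpa using this
  have ha : Tendsto (fun n : ℕ => (a n : ℝ) / n) atTop (nhds w) :=
    (tendsto_nat_floor_mul_div_atTop hw0.le).comp tendsto_natCast_atTop_atTop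
  have hna : Tendsto (fun n : ℕ => ((n : ℝ) - a n) / n) atTop (nhds (1 - w)) := by
    have h := (tendsto_const_nhds (x := (1:ℝ)) (f := atTop)).sub ha
    refine Tendsto.congr' ?_ h
    filter_upwards [eventually_ge_atTop 1] with n hn
    have hn0 : (n:ℝ) ≠ 0 := by
      have : 0 < n := hn
      positivity
    field_simp
  -- b n / n → β
  have hb : Tendsto (fun n : ℕ => (b n : ℝ) / n) atTop (nhds β) := by
    have hUp : Tendsto (fun n : ℕ => (((n:ℝ) - a n) / n) / ((K:ℝ)+1)) atTop (nhds β) := by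
      rw [hβ_def]; exact hna.div_const _
    have hLo : Tendsto (fun n : ℕ => (((n:ℝ) - a n) / n) / ((K:ℝ)+1) - 1 / n) atTop
        (nhds β) := by
      have := hUp.sub tendsto_one_div_atTop_nhds_zero_nat
      simpa using this
    refine tendsto_of_tendsto_of_tendsto_of_le_of_le' hLo hUp ?_ ?_
    · filter_upwards [eventually_ge_atTop 1] with n hn
      have hn0 : (0:ℝ) < n := by exact_mod_cast hn
      have hdm := Nat.div_add_mod (n - a n) (K + 1)
      set r := (n - a n) % (K + 1) with hr_def
      have hr : r < K + 1 := Nat.mod_lt _ (Nat.succ_pos K)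
      have hcast : ((K:ℝ)+1) * b n + r = (n:ℝ) - a n := by
        have : ((K + 1) * b n + r : ℕ) = (n - a n : ℕ) := hdm
        have h2 := congrArg (fun m : ℕ => (m : ℝ)) this
        push_cast [Nat.cast_sub (haln n)] at h2
        linarith
      have hrK : (r:ℝ) ≤ K := by
        have : r ≤ K := by omega
        exact_mod_cast this
      have key : ((n:ℝ) - a n) / ((K:ℝ)+1) - 1 ≤ b n := by
        rw [sub_le_iff_le_add, div_le_iff₀ hK1]
        nlinarith
      calc (((n:ℝ) - a n) / n) / ((K:ℝ)+1) - 1 / n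
          = (((n:ℝ) - a n) / ((K:ℝ)+1) - 1) / n := by
            field_simp
        _ ≤ (b n : ℝ) / n := by
            apply div_le_div_of_nonneg_right key hn0.le |>.trans_eq rfl
    · filter_upwards [eventually_ge_atTop 1] with n hn
      have hn0 : (0:ℝ) < n := by exact_mod_cast hn
      have h1 : (b n : ℝ) ≤ ((n - a n : ℕ) : ℝ) / ((K:ℝ) + 1) := by
        have := Nat.cast_div_le (α := ℝ) (m := n - a n) (n := K + 1)
        simpa using this
      rw [Nat.cast_sub (haln n)] at h1
      calc (b n : ℝ) / n ≤ (((n:ℝ) - a n) / ((K:ℝ)+1)) / n :=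
            div_le_div_of_nonneg_right h1 hn0.le |>.trans_eq rfl
        _ = (((n:ℝ) - a n) / n) / ((K:ℝ)+1) := by rw [div_right_comm]
  -- a, b, N → ∞
  have hatop : Tendsto a atTop atTop := by
    have hwn : Tendsto (fun n : ℕ => w * (n:ℝ)) atTop atTop :=
      tendsto_natCast_atTop_atTop.const_mul_atTop hw0
    exact tendsto_nat_floor_atTop.comp hwn
  have hbtop : Tendsto b atTop atTop := by
    rw [← tendsto_natCast_atTop_iff (R := ℝ)]
    have h := Tendsto.pos_mul_atTop hβ0 hb tendsto_natCast_atTop_atTop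
    refine Tendsto.congr' ?_ h
    filter_upwards [eventually_ge_atTop 1] with n hn
    have hn0 : (n:ℝ) ≠ 0 := by
      have : 0 < n := hn
      positivity
    field_simp
  have hNtop : Tendsto (fun n => a n + b n) atTop atTop :=
    tendsto_atTop_mono (fun n => Nat.le_add_right (a n) (b n)) hatop
  have hN : Tendsto (fun n : ℕ => ((a n + b n : ℕ) : ℝ) / n) atTop (nhds s) := by
    rw [hs_def]
    have := ha.add hb
    refine Tendsto.congr ?_ this
    intro n
    push_cast
    rw [add_div]
  -- Efn limits
  have hEa := tendsto_Efn_comp hatop ha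
  have hEb := tendsto_Efn_comp hbtop hb
  have hEN := tendsto_Efn_comp hNtop hN
  -- ratios a/N, b/N
  have haN : Tendsto (fun n : ℕ => (a n : ℝ) / ((a n + b n : ℕ) : ℝ)) atTop (nhds (w / s)) := by
    have h := ha.div hN hs0.ne'
    refine Tendsto.congr' ?_ h
    filter_upwards [eventually_ge_atTop 1, hNtop.eventually_ge_atTop 1] with n hn hNn
    have hn0 : (n:ℝ) ≠ 0 := by
      have : 0 < n := hn
      positivity
    have hN0 : ((a n + b n : ℕ) : ℝ) ≠ 0 := by
      have : 0 < a n + b n := hNn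
      positivity
    simp only [Pi.div_apply]
    field_simp
  have hbN : Tendsto (fun n : ℕ => (b n : ℝ) / ((a n + b n : ℕ) : ℝ)) atTop (nhds (β / s)) := by
    have h := hb.div hN hs0.ne'
    refine Tendsto.congr' ?_ h
    filter_upwards [eventually_ge_atTop 1, hNtop.eventually_ge_atTop 1] with n hn hNn
    have hn0 : (n:ℝ) ≠ 0 := by
      have : 0 < n := hn
      positivity
    have hN0 : ((a n + b n : ℕ) : ℝ) ≠ 0 := by
      have : 0 < a n + b n := hNn
      positivity
    simp only [Pi.div_apply]
    field_simp
  have hlogaN : Tendsto (fun n : ℕ => Real.log ((a n : ℝ) / ((a n + b n : ℕ) : ℝ))) atTop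
      (nhds (Real.log (w / s))) :=
    ((Real.continuousAt_log (div_pos hw0 hs0).ne').tendsto).comp haN
  have hlogbN : Tendsto (fun n : ℕ => Real.log ((b n : ℝ) / ((a n + b n : ℕ) : ℝ))) atTop
      (nhds (Real.log (β / s))) :=
    ((Real.continuousAt_log (div_pos hβ0 hs0).ne').tendsto).comp hbN
  -- the auxiliary sequence G and its limit
  have hG : Tendsto (fun n : ℕ =>
      (a n : ℝ) / n * Real.logb 2 P + (1 / Real.log 2) *
        (-((a n : ℝ) / n * Real.log ((a n : ℝ) / ((a n + b n : ℕ) : ℝ)))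
          - (b n : ℝ) / n * Real.log ((b n : ℝ) / ((a n + b n : ℕ) : ℝ))
          + (Efn (a n + b n) / n - Efn (a n) / n - Efn (b n) / n))) atTop
      (nhds (w * Real.logb 2 P + (1 / Real.log 2) *
        (-(w * Real.log (w / s)) - β * Real.log (β / s) + (0 - 0 - 0)))) := by
    exact (ha.mul_const _).add (tendsto_const_nhds.mul
      (((ha.mul hlogaN).neg.sub (hb.mul hlogbN)).add ((hEN.sub hEa).sub hEb)))
  -- eventual equality with the target sequence
  have hFG : (fun n : ℕ =>
      (1 / (n : ℝ)) * Real.logb 2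
        ((P : ℝ) ^ (a n) * (Nat.choose (a n + b n) (a n) : ℝ))) =ᶠ[atTop]
      (fun n : ℕ =>
      (a n : ℝ) / n * Real.logb 2 P + (1 / Real.log 2) *
        (-((a n : ℝ) / n * Real.log ((a n : ℝ) / ((a n + b n : ℕ) : ℝ)))
          - (b n : ℝ) / n * Real.log ((b n : ℝ) / ((a n + b n : ℕ) : ℝ))
          + (Efn (a n + b n) / n - Efn (a n) / n - Efn (b n) / n))) := by
    filter_upwards [hatop.eventually_ge_atTop 1, hbtop.eventually_ge_atTop 1,
      eventually_ge_atTop 1] with n hA1 hB1 hn1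
    have hA0 : (0:ℝ) < a n := by exact_mod_cast hA1
    have hB0 : (0:ℝ) < b n := by exact_mod_cast hB1
    have hn0 : (0:ℝ) < n := by exact_mod_cast hn1
    have hNn0 : (0:ℝ) < ((a n + b n : ℕ) : ℝ) := by
      have : 0 < a n + b n := by omega
      exact_mod_cast this
    have hP0 : (0:ℝ) < (P:ℝ) := by exact_mod_cast hP
    have hCpos : 0 < ((a n + b n).choose (a n)) := Nat.choose_pos (Nat.le_add_right _ _)
    have hC0 : (0:ℝ) < (((a n + b n).choose (a n) : ℕ) : ℝ) := by exact_mod_cast hCpos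
    have hfa : (0:ℝ) < (Nat.factorial (a n) : ℝ) := by exact_mod_cast (a n).factorial_pos
    have hfb : (0:ℝ) < (Nat.factorial (b n) : ℝ) := by exact_mod_cast (b n).factorial_pos
    have hfact : (((a n + b n).choose (a n) : ℕ) : ℝ) * (Nat.factorial (a n) : ℝ) *
        (Nat.factorial (b n) : ℝ) = (Nat.factorial (a n + b n) : ℝ) := by
      have h := Nat.choose_mul_factorial_mul_factorial (Nat.le_add_right (a n) (b n))
      rw [Nat.add_sub_cancel_left] at h
      exact_mod_cast h
    have hlogC : Real.log (((a n + b n).choose (a n) : ℕ) : ℝ) =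
        Real.log (Nat.factorial (a n + b n) : ℝ) - Real.log (Nat.factorial (a n) : ℝ)
          - Real.log (Nat.factorial (b n) : ℝ) := by
      have h := congrArg Real.log hfact
      rw [Real.log_mul (by positivity) hfb.ne', Real.log_mul hC0.ne' hfa.ne'] at h
      linarith
    have hE : ∀ m : ℕ, Real.log (Nat.factorial m : ℝ) = (m:ℝ) * Real.log m - m + Efn m := by
      intro m; rw [Efn]; ring
    have hC2 : Real.log (((a n + b n).choose (a n) : ℕ) : ℝ) =
        -((a n:ℝ) * Real.log ((a n:ℝ)/((a n + b n : ℕ):ℝ)))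
          - (b n:ℝ) * Real.log ((b n:ℝ)/((a n + b n : ℕ):ℝ))
          + (Efn (a n + b n) - Efn (a n) - Efn (b n)) := by
      rw [hlogC, hE, hE, hE, Real.log_div hA0.ne' hNn0.ne', Real.log_div hB0.ne' hNn0.ne']
      push_cast
      ring
    rw [Real.logb_mul (pow_ne_zero _ hP0.ne') hC0.ne', Real.logb_pow]
    simp only [Real.logb]
    rw [hC2]
    have hl2 : Real.log 2 ≠ 0 := (Real.log_pos one_lt_two).ne'
    field_simp
  have hwK : (0:ℝ) < w * K + 1 := by positivity
  have hsv : s = (w * ↑K + 1) / (↑K + 1) := by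
    rw [hs_def, hβ_def]; field_simp; ring
  have hval : w * Real.logb 2 ↑P + 1 / Real.log 2 *
      (-(w * Real.log (w / s)) - β * Real.log (β / s) + (0 - 0 - 0)) =
      (w * ↑K + 1) / (↑K + 1) * binH (w * (↑K + 1) / (w * ↑K + 1)) + w * Real.logb 2 ↑P := by
    have hp : w * (↑K + 1) / (w * ↑K + 1) = w / s := by
      rw [hsv, div_div_eq_mul_div]
    have h1p : 1 - w / s = β / s := by
      have hsw : s - w = β := by rw [hs_def]; ring
      field_simp
      linarith
    rw [binH, hp, h1p, ← hsv]
    simp only [Real.logb]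
    have hl2 : Real.log 2 ≠ 0 := (Real.log_pos one_lt_two).ne'
    field_simp
    ring
  rw [← hval]
  exact hG.congr' hFG.symm
end

section
/- Let P ≥ 2 be fixed real, and for real K ≥ 0 let r(K) > P be the unique positive root of x^K(x − P) = 1, and define w*(K) = P/((K+1)(r(K)−P) + P). Then (K+1)(r(K)−P) is strictly decreasing in K with limit 0 as K → ∞; consequently w*(K) is strictly increasing with lim_{K→∞} w*(K) = 1. -/
open Filter


private lemma g_hasDerivAt (P t : ℝ) (hP : 2 ≤ P) (ht : 0 < t) :
    HasDerivAt (fun s : ℝ => s - s * Real.log s / Real.log (P + s))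
      (1 - ((Real.log t + 1) * Real.log (P + t) - t * Real.log t * (P + t)⁻¹)
        / (Real.log (P + t)) ^ 2) t := by
  have hPt : 0 < P + t := by linarith
  have hA : Real.log (P + t) ≠ 0 := ne_of_gt (Real.log_pos (by linarith))
  have h1 : HasDerivAt (fun s : ℝ => s * Real.log s) (Real.log t + 1) t := by
    have := (hasDerivAt_id t).mul (Real.hasDerivAt_log ht.ne')
    convert this using 1
    · rfl
    · rfl
    · rfl
    · simp [ht.ne']
  have h2 : HasDerivAt (fun s : ℝ => Real.log (P + s)) ((P + t)⁻¹) t := by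
    have := (Real.hasDerivAt_log hPt.ne').comp t ((hasDerivAt_id t).const_add P)
    simpa [Function.comp_def] using this
  have h3 := h1.div h2 hA
  have h4 := (hasDerivAt_id t).sub h3
  convert h4 using 1
  all_goals rfl

private lemma g_deriv_pos (P t : ℝ) (hP : 2 ≤ P) (ht0 : 0 < t) (ht1 : t < 1) :
    0 < 1 - ((Real.log t + 1) * Real.log (P + t) - t * Real.log t * (P + t)⁻¹)
        / (Real.log (P + t)) ^ 2 := by
  have hPt : 2 < P + t := by linarith
  set A := Real.log (P + t) with hAdef
  set b := -Real.log t with hbdef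
  have hl2 : (0.6931471803 : ℝ) < Real.log 2 := Real.log_two_gt_d9
  have hl2' : Real.log 2 < 0.6931471808 := Real.log_two_lt_d9
  have hA2 : Real.log 2 < A := Real.log_lt_log (by norm_num) hPt
  have hApos : 0 < A := by linarith
  have hbpos : 0 < b := by
    have := Real.log_neg ht0 ht1
    simp only [hbdef]; linarith
  set q := t / (P + t) with hqdef
  have hq0 : 0 ≤ q := by positivity
  have hq : q * (P + t) = t := by rw [hqdef]; exact div_mul_cancel₀ t (by linarith)
  have hqA : q < A := by
    have : q < 1 / 2 := by rw [hqdef, div_lt_iff₀ (by linarith)]; linarith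
    linarith
  have key : 0 < A ^ 2 - A + b * (A - q) := by
    rcases le_or_gt 1 A with hA1 | hA1
    · nlinarith [mul_pos hbpos (sub_pos.mpr hqA), mul_nonneg (sub_nonneg.mpr hA1) hApos.le]
    · -- case A < 1
      have hbt : 1 - t ≤ b := by
        have := Real.log_le_sub_one_of_pos ht0
        simp only [hbdef]; linarith
      have hte : t < 0.7182818286 - 0 := by
        have h1 : P + t < Real.exp 1 := by
          have : Real.exp A < Real.exp 1 := Real.exp_lt_exp.mpr hA1
          rwa [hAdef, Real.exp_log (by linarith)] at this
        have := Real.exp_one_lt_d9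
        linarith
      set u := t / (2 + t) with hudef
      have hu0 : 0 ≤ u := by positivity
      have hu : u * (2 + t) = t := by rw [hudef]; exact div_mul_cancel₀ t (by linarith)
      have hqu : q ≤ u := by
        rw [hqdef, hudef]
        gcongr
      have huB : u ≤ 0.2643 := by nlinarith
      have hAu : Real.log 2 + u ≤ A := by
        have h := Real.log_le_sub_one_of_pos (show (0:ℝ) < 2 / (2 + t) by positivity)
        rw [Real.log_div (by norm_num) (by linarith)] at h
        have h2 : 1 - 2 / (2 + t) = u := by rw [hudef]; field_simp; ring
        have h3 : Real.log (2 + t) ≤ A := Real.log_le_log (by linarith) (by linarith)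
        linarith
      -- b * (A - q) ≥ (1 - t) * log 2
      have h5 : (1 - t) * Real.log 2 ≤ b * (A - q) := by
        have h6 : b * (A - u) ≤ b * (A - q) := by nlinarith
        have h7 : (1 - t) * Real.log 2 ≤ b * (A - u) := by nlinarith
        linarith
      -- A - A^2 ≤ (log2 + u)(1 - log2 - u)
      have h8 : A - A ^ 2 ≤ (Real.log 2 + u) * (1 - Real.log 2 - u) := by
        nlinarith [mul_nonneg (sub_nonneg.mpr hAu) (by linarith : (0:ℝ) ≤ A + (Real.log 2 + u) - 1)]
      have h9 : (Real.log 2 + u) * (1 - Real.log 2 - u) < (1 - t) * Real.log 2 := by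
        nlinarith [mul_nonneg hu0 ht0.le, sq_nonneg u]
      linarith
  have hnum : (Real.log t + 1) * A - t * Real.log t * (P + t)⁻¹
      = A ^ 2 - (A ^ 2 - A + b * (A - q)) := by
    have hbq : Real.log t = -b := by simp [hbdef]
    rw [hbq, hqdef]
    field_simp
    ring
  rw [hnum]
  have hA2pos : (0:ℝ) < A ^ 2 := by positivity
  rw [sub_pos, div_lt_one hA2pos]
  linarith

private lemma g_strictMono (P : ℝ) (hP : 2 ≤ P) :
    StrictMonoOn (fun s : ℝ => s - s * Real.log s / Real.log (P + s)) (Set.Ioc 0 1) := by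
  apply strictMonoOn_of_deriv_pos (convex_Ioc 0 1)
  · intro x hx
    exact ((g_hasDerivAt P x hP hx.1).differentiableAt.continuousAt).continuousWithinAt
  · intro x hx
    rw [interior_Ioc] at hx
    rw [(g_hasDerivAt P x hP hx.1).deriv]
    exact g_deriv_pos P x hP hx.1 hx.2

/-- For fixed real `P ≥ 2`, with `r(K) > P` the unique positive root of `x^K(x−P) = 1`, the
function `(K+1)(r(K)−P)` is strictly decreasing to `0`, hence
`w*(K) = P/((K+1)(r(K)−P)+P)` is strictly increasing with limit `1`. -/
theorem optimal_weight_as_function_of_K (P : ℝ) (hP : 2 ≤ P) (r : ℝ → ℝ)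
    (hr : ∀ K : ℝ, 0 ≤ K → P < r K ∧ (r K) ^ K * (r K - P) = 1) :
    StrictAntiOn (fun K : ℝ => (K + 1) * (r K - P)) (Set.Ici 0) ∧
    Tendsto (fun K : ℝ => (K + 1) * (r K - P)) atTop (nhds 0) ∧
    StrictMonoOn (fun K : ℝ => P / ((K + 1) * (r K - P) + P)) (Set.Ici 0) ∧
    Tendsto (fun K : ℝ => P / ((K + 1) * (r K - P) + P)) atTop (nhds 1) := by
  have hP0 : (0:ℝ) < P := by linarith
  have ht0 : ∀ K : ℝ, 0 ≤ K → 0 < r K - P := fun K hK => sub_pos.2 (hr K hK).1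
  have hrpos : ∀ K : ℝ, 0 ≤ K → 0 < r K := fun K hK => by linarith [(hr K hK).1]
  have hr1 : ∀ K : ℝ, 0 ≤ K → 1 < r K := fun K hK => by linarith [(hr K hK).1]
  have hlog : ∀ K : ℝ, 0 ≤ K → Real.log (r K - P) = -K * Real.log (r K) := by
    intro K hK
    have h := (hr K hK).2
    have hpow : (0:ℝ) < (r K) ^ K := Real.rpow_pos_of_pos (hrpos K hK) K
    have h1 : Real.log ((r K) ^ K * (r K - P)) = 0 := by rw [h, Real.log_one]
    rw [Real.log_mul hpow.ne' (ht0 K hK).ne', Real.log_rpow (hrpos K hK)] at h1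
    linarith
  have ht1 : ∀ K : ℝ, 0 ≤ K → r K - P ≤ 1 := by
    intro K hK
    have h := (hr K hK).2
    have h2 : (1:ℝ) ≤ (r K) ^ K := by
      have := Real.rpow_le_rpow_of_exponent_le (le_of_lt (hr1 K hK)) hK
      rwa [Real.rpow_zero] at this
    nlinarith [ht0 K hK]
  have hFg : ∀ K : ℝ, 0 ≤ K → (K + 1) * (r K - P)
      = (r K - P) - (r K - P) * Real.log (r K - P) / Real.log (P + (r K - P)) := by
    intro K hK
    have hPt : P + (r K - P) = r K := by ring
    rw [hPt, hlog K hK]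
    have hA : Real.log (r K) ≠ 0 := ne_of_gt (Real.log_pos (hr1 K hK))
    field_simp
    ring
  have htmono : ∀ K₁ : ℝ, 0 ≤ K₁ → ∀ K₂ : ℝ, 0 ≤ K₂ → K₁ < K₂ → r K₂ - P < r K₁ - P := by
    intro K₁ h1 K₂ h2 hlt
    by_contra hcon
    push_neg at hcon
    have hA1 : Real.log (r K₁) ≤ Real.log (r K₂) :=
      Real.log_le_log (hrpos K₁ h1) (by linarith)
    have hA1pos : 0 < Real.log (r K₁) := Real.log_pos (hr1 K₁ h1)
    have hL : Real.log (r K₁ - P) ≤ Real.log (r K₂ - P) :=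
      Real.log_le_log (ht0 K₁ h1) (by linarith)
    rw [hlog K₁ h1, hlog K₂ h2] at hL
    nlinarith [mul_le_mul_of_nonneg_left hA1 h1]
  have hanti : StrictAntiOn (fun K : ℝ => (K + 1) * (r K - P)) (Set.Ici 0) := by
    intro K₁ h1 K₂ h2 hlt
    have h1' : (0:ℝ) ≤ K₁ := h1
    have h2' : (0:ℝ) ≤ K₂ := h2
    simp only
    rw [hFg K₁ h1', hFg K₂ h2']
    exact g_strictMono P hP ⟨ht0 K₂ h2', ht1 K₂ h2'⟩ ⟨ht0 K₁ h1', ht1 K₁ h1'⟩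
      (htmono K₁ h1' K₂ h2' hlt)
  have hFpos : ∀ K : ℝ, 0 ≤ K → 0 < (K + 1) * (r K - P) := by
    intro K hK
    have := ht0 K hK
    nlinarith
  have hlim : Tendsto (fun K : ℝ => (K + 1) * (r K - P)) atTop (nhds 0) := by
    have hc : (0:ℝ) < Real.log 2 := Real.log_pos (by norm_num)
    have htend : Tendsto (fun K : ℝ => (K + 1) * Real.exp (-(Real.log 2 * K))) atTop (nhds 0) := by
      have h1 : Tendsto (fun K : ℝ => Real.log 2 * K) atTop atTop :=
        Tendsto.const_mul_atTop hc tendsto_id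
      have h2 : Tendsto (fun x : ℝ => x * Real.exp (-x)) atTop (nhds 0) := by
        simpa using Real.tendsto_pow_mul_exp_neg_atTop_nhds_zero 1
      have h3 := h2.comp h1
      have h4 := (Real.tendsto_exp_neg_atTop_nhds_zero).comp h1
      have h5 : Tendsto (fun K : ℝ =>
          (1 / Real.log 2) * ((Real.log 2 * K) * Real.exp (-(Real.log 2 * K)))
          + Real.exp (-(Real.log 2 * K))) atTop (nhds ((1 / Real.log 2) * 0 + 0)) :=
        ((h3.const_mul _).add h4)
      rw [mul_zero, add_zero] at h5
      convert h5 using 2 with K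
      field_simp
    apply tendsto_of_tendsto_of_tendsto_of_le_of_le' tendsto_const_nhds htend
    · filter_upwards [eventually_ge_atTop (0:ℝ)] with K hK
      exact (hFpos K hK).le
    · filter_upwards [eventually_ge_atTop (0:ℝ)] with K hK
      have hpow : (0:ℝ) < (r K) ^ K := Real.rpow_pos_of_pos (hrpos K hK) K
      have h2K : (2:ℝ) ^ K ≤ (r K) ^ K :=
        Real.rpow_le_rpow (by norm_num) (by linarith [(hr K hK).1]) hK
      have h2Kpos : (0:ℝ) < (2:ℝ) ^ K := Real.rpow_pos_of_pos (by norm_num) K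
      have htinv : r K - P ≤ ((2:ℝ) ^ K)⁻¹ := by
        have heq : r K - P = ((r K) ^ K)⁻¹ := by
          field_simp
          linarith [(hr K hK).2]
        rw [heq]
        exact inv_anti₀ h2Kpos h2K
      have hexp : ((2:ℝ) ^ K)⁻¹ = Real.exp (-(Real.log 2 * K)) := by
        rw [Real.rpow_def_of_pos (by norm_num : (0:ℝ) < 2), ← Real.exp_neg]
      calc (K + 1) * (r K - P) ≤ (K + 1) * ((2:ℝ) ^ K)⁻¹ := by
            apply mul_le_mul_of_nonneg_left htinv (by linarith)
        _ = (K + 1) * Real.exp (-(Real.log 2 * K)) := by rw [hexp]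
  refine ⟨hanti, hlim, ?_, ?_⟩
  · intro K₁ h1 K₂ h2 hlt
    have h1' : (0:ℝ) ≤ K₁ := h1
    have h2' : (0:ℝ) ≤ K₂ := h2
    have hF := hanti h1 h2 hlt
    simp only at hF ⊢
    have hD2 : 0 < (K₂ + 1) * (r K₂ - P) + P := by linarith [hFpos K₂ h2']
    exact div_lt_div_of_pos_left hP0 hD2 (by linarith)
  · have h := (tendsto_const_nhds (x := P) (f := atTop (α := ℝ))).div
      (hlim.add_const P) (by simpa using hP0.ne')
    rw [zero_add, div_self hP0.ne'] at h
    exact h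
end
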